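/- Let ζ be a finite nonempty set of lattice points in ℤ^N. Then 0 lies in the interior of the corner hull Corner(ζ) := Conv(ζ) + ℝ^N_{≥0} if and only if there is no nonzero lattice point r in the nonnegative orthant of the dual lattice such that r(w) ≥ 0 for all w ∈ ζ. -/

import Mathlib

open Pointwise

open Finset in

/-- If a finite system of integer linear inequalities `⟨β, r⟩ ≥ 0` has a real solution,
it has a rational solution preserving strictness. -/
lemma key_rat (N : ℕ) (B : Finset (Fin N → ℤ)) (r : Fin N → ℝ)
    (hr : ∀ β ∈ B, 0 ≤ ∑ l, (β l : ℝ) * r l) :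
    ∃ ρ : Fin N → ℚ,
      ∀ β ∈ B, 0 ≤ ∑ l, (β l : ℚ) * ρ l ∧
        (0 < ∑ l, (β l : ℝ) * r l → 0 < ∑ l, (β l : ℚ) * ρ l) := by
  classical
  set V : Submodule ℚ ℝ := Submodule.span ℚ (Set.range r) with hVdef
  have : FiniteDimensional ℚ V := FiniteDimensional.span_of_finite ℚ (Set.finite_range r)
  let b : Module.Basis (Fin (Module.finrank ℚ V)) ℚ V := Module.finBasis ℚ V
  have hrV : ∀ l, r l ∈ V := fun l => Submodule.subset_span (Set.mem_range_self l)
  set rv : Fin N → V := fun l => ⟨r l, hrV l⟩ with hrvdef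
  set c : Fin N → Fin (Module.finrank ℚ V) → ℚ := fun l i => b.repr (rv l) i with hcdef
  have hrl : ∀ l, r l = ∑ i, (c l i : ℝ) * (b i : ℝ) := by
    intro l
    have h1 : (∑ i, b.repr (rv l) i • b i : V) = rv l := b.sum_repr (rv l)
    have h2 := congrArg (Subtype.val) h1
    simp only [hrvdef] at h2
    rw [← h2]
    push_cast [Submodule.coe_sum, Rat.smul_def]
    rfl
  set d : (Fin N → ℤ) → Fin (Module.finrank ℚ V) → ℚ :=
    fun β i => ∑ l, (β l : ℚ) * c l i with hddef
  have hsum : ∀ β : Fin N → ℤ,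
      ∑ l, (β l : ℝ) * r l = ∑ i, (d β i : ℝ) * (b i : ℝ) := by
    intro β
    calc ∑ l, (β l : ℝ) * r l
        = ∑ l, ∑ i, (β l : ℝ) * ((c l i : ℝ) * (b i : ℝ)) := by
          refine Finset.sum_congr rfl fun l _ => ?_
          rw [hrl l, Finset.mul_sum]
      _ = ∑ i, ∑ l, (β l : ℝ) * ((c l i : ℝ) * (b i : ℝ)) := Finset.sum_comm
      _ = ∑ i, (d β i : ℝ) * (b i : ℝ) := by
          refine Finset.sum_congr rfl fun i _ => ?_
          push_cast [hddef, Finset.sum_mul]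
          ring_nf
          exact Finset.sum_congr rfl fun l _ => by ring
  have htight : ∀ β : Fin N → ℤ, (∑ l, (β l : ℝ) * r l = 0) → ∀ i, d β i = 0 := by
    intro β h i
    have hv : (∑ l, (β l : ℚ) • rv l) = 0 := by
      apply Subtype.ext
      push_cast [Submodule.coe_sum, Rat.smul_def]
      simpa using h
    have h2 := congrArg (fun v => b.repr v i) hv
    simpa [hddef, hcdef, map_sum] using h2
  -- choose rational q near (b i : ℝ)
  set Bpos : Finset (Fin N → ℤ) := B.filter (fun β => 0 < ∑ l, (β l : ℝ) * r l) with hBpos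
  set U : Set (Fin (Module.finrank ℚ V) → ℝ) :=
    ⋂ β ∈ Bpos, {q | 0 < ∑ i, q i * (d β i : ℝ)} with hUdef
  have hUopen : IsOpen U := by
    refine isOpen_biInter_finset fun β _ => ?_
    exact isOpen_lt continuous_const
      (continuous_finset_sum _ fun i _ => (continuous_apply i).mul continuous_const)
  have hq0 : (fun i => (b i : ℝ)) ∈ U := by
    rw [hUdef]
    simp only [Set.mem_iInter, Set.mem_setOf_eq]
    intro β hβ
    rw [hBpos, Finset.mem_filter] at hβ
    have h2 := hβ.2
    rw [hsum β] at h2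
    simpa [mul_comm] using h2
  have hdense : DenseRange (fun (p : Fin (Module.finrank ℚ V) → ℚ) (i : Fin (Module.finrank ℚ V)) => (p i : ℝ)) := by
    have : Dense (Set.pi Set.univ fun _ : Fin (Module.finrank ℚ V) => Set.range ((↑) : ℚ → ℝ)) :=
      dense_pi _ fun i _ => Rat.denseRange_cast
    refine this.mono ?_
    rintro x hx
    simp only [Set.mem_pi, Set.mem_univ, forall_true_left, Set.mem_range] at hx
    choose p hp using hx
    exact ⟨p, funext hp⟩
  obtain ⟨p, hp⟩ := hdense.exists_mem_open hUopen ⟨_, hq0⟩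
  refine ⟨fun l => ∑ i, p i * c l i, fun β hβ => ?_⟩
  have hswap : ∑ l, (β l : ℚ) * ∑ i, p i * c l i = ∑ i, p i * d β i := by
    calc ∑ l, (β l : ℚ) * ∑ i, p i * c l i
        = ∑ l, ∑ i, (β l : ℚ) * (p i * c l i) := by
          refine Finset.sum_congr rfl fun l _ => ?_
          rw [Finset.mul_sum]
      _ = ∑ i, ∑ l, (β l : ℚ) * (p i * c l i) := Finset.sum_comm
      _ = ∑ i, p i * d β i := by
          refine Finset.sum_congr rfl fun i _ => ?_
          rw [hddef, Finset.mul_sum]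
          exact Finset.sum_congr rfl fun l _ => by ring
  have hstrict : 0 < ∑ l, (β l : ℝ) * r l → 0 < ∑ l, (β l : ℚ) * ∑ i, p i * c l i := by
    intro hpos
    have hmem : (fun i => (p i : ℝ)) ∈ {q | 0 < ∑ i, q i * (d β i : ℝ)} := by
      rw [hUdef] at hp
      exact Set.mem_iInter₂.mp hp β (by rw [hBpos]; exact Finset.mem_filter.mpr ⟨hβ, hpos⟩)
    have hcast : (0:ℝ) < ((∑ i, p i * d β i : ℚ) : ℝ) := by push_cast; simpa using hmem
    rw [hswap]
    exact_mod_cast hcast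
  refine ⟨?_, hstrict⟩
  rcases (hr β hβ).lt_or_eq with h | h
  · exact (hstrict h).le
  · rw [hswap]
    have hz := htight β h.symm
    simp [hz]


lemma key_int (N : ℕ) (ρ : Fin N → ℚ) :
    ∃ (r : Fin N → ℤ) (dd : ℚ), 0 < dd ∧ ∀ l, (r l : ℚ) = dd * ρ l := by
  classical
  refine ⟨fun l => (ρ l).num * ∏ l' ∈ Finset.univ.erase l, ((ρ l').den : ℤ),
    ∏ l', ((ρ l').den : ℚ), ?_, ?_⟩
  · exact Finset.prod_pos fun l _ => by exact_mod_cast (ρ l).pos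
  · intro l
    have h1 : ((ρ l).num : ℚ) = ρ l * (ρ l).den := by
      have := Rat.num_div_den (ρ l)
      have hd : ((ρ l).den : ℚ) ≠ 0 := by exact_mod_cast (ρ l).den_nz
      rw [div_eq_iff hd] at this
      exact this
    have h2 : ((ρ l).den : ℚ) * ∏ l' ∈ Finset.univ.erase l, ((ρ l').den : ℚ)
        = ∏ l', ((ρ l').den : ℚ) :=
      Finset.mul_prod_erase Finset.univ (fun l' => ((ρ l').den : ℚ)) (Finset.mem_univ l)
    push_cast
    rw [h1, ← h2]
    ring

theorem stmt1 (N : ℕ) (ζ : Finset (Fin N → ℤ)) (hζ : ζ.Nonempty) :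
    (0 : Fin N → ℝ) ∈
      interior (convexHull ℝ
          ((fun w : Fin N → ℤ => fun l => (w l : ℝ)) '' (ζ : Set (Fin N → ℤ))) +
        {x : Fin N → ℝ | ∀ l, 0 ≤ x l}) ↔
    ¬ ∃ r : Fin N → ℤ, (∀ l, 0 ≤ r l) ∧ r ≠ 0 ∧ ∀ w ∈ ζ, 0 ≤ ∑ l, r l * w l := by
  classical
  set S : Set (Fin N → ℝ) := (fun w : Fin N → ℤ => fun l => (w l : ℝ)) '' (ζ : Set (Fin N → ℤ)) with hSdef
  set Qs : Set (Fin N → ℝ) := {x : Fin N → ℝ | ∀ l, 0 ≤ x l} with hQdef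
  set C : Set (Fin N → ℝ) := convexHull ℝ S + Qs with hCdef
  have hQmem : ∀ (z : Fin N → ℝ), (∀ l, 0 ≤ z l) → z ∈ Qs := fun z hz => hz
  have hQmem' : ∀ z ∈ Qs, ∀ l, 0 ≤ z l := fun z hz => hz
  constructor
  · rintro h0 ⟨r, hr0, hrne, hrw⟩
    obtain ⟨l₀, hl₀⟩ := Function.ne_iff.mp hrne
    have hl₀pos : (0:ℝ) < (r l₀ : ℝ) := by
      exact_mod_cast lt_of_le_of_ne (hr0 l₀) (Ne.symm hl₀)
    have hfC : ∀ x ∈ C, 0 ≤ ∑ l, (r l : ℝ) * x l := by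
      rintro x hx
      rw [hCdef, Set.mem_add] at hx
      obtain ⟨y, hy, z, hz, rfl⟩ := hx
      have hhalf : convexHull ℝ S ⊆ {x : Fin N → ℝ | 0 ≤ ∑ l, (r l : ℝ) * x l} := by
        apply convexHull_min
        · rintro _ ⟨w, hw, rfl⟩
          have h1 : (0:ℤ) ≤ ∑ l, r l * w l := hrw w hw
          have h2 : (0:ℝ) ≤ ((∑ l, r l * w l : ℤ) : ℝ) := by exact_mod_cast h1
          push_cast at h2
          simpa [Set.mem_setOf_eq] using h2
        · intro a ha b hb s t hs ht hst
          simp only [Set.mem_setOf_eq] at ha hb ⊢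
          have heq : ∑ l, (r l : ℝ) * (s • a + t • b) l
              = s * ∑ l, (r l : ℝ) * a l + t * ∑ l, (r l : ℝ) * b l := by
            rw [Finset.mul_sum, Finset.mul_sum, ← Finset.sum_add_distrib]
            refine Finset.sum_congr rfl fun l _ => ?_
            simp only [Pi.add_apply, Pi.smul_apply, smul_eq_mul]
            ring
          rw [heq]
          exact add_nonneg (mul_nonneg hs ha) (mul_nonneg ht hb)
      have h1 := hhalf hy
      simp only [Set.mem_setOf_eq] at h1
      have h2 : 0 ≤ ∑ l, (r l : ℝ) * z l :=
        Finset.sum_nonneg fun l _ =>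
          mul_nonneg (by exact_mod_cast hr0 l) (hQmem' z hz l)
      calc (0:ℝ) ≤ (∑ l, (r l:ℝ) * y l) + ∑ l, (r l:ℝ) * z l := add_nonneg h1 h2
        _ = ∑ l, (r l:ℝ) * (y + z) l := by
            rw [← Finset.sum_add_distrib]
            exact Finset.sum_congr rfl fun l _ => by simp [mul_add]
    obtain ⟨ε, hε, hball⟩ := Metric.mem_nhds_iff.mp (mem_interior_iff_mem_nhds.mp h0)
    set x : Fin N → ℝ := fun l => if l = l₀ then -(ε/2) else 0 with hxdef
    have hxball : x ∈ Metric.ball (0 : Fin N → ℝ) ε := by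
      rw [Metric.mem_ball, dist_zero_right]
      have hn : ‖x‖ ≤ ε/2 := by
        refine (pi_norm_le_iff_of_nonneg (by linarith)).mpr fun i => ?_
        by_cases hi : i = l₀
        · simp only [hxdef, hi, if_pos]
          rw [Real.norm_eq_abs, abs_neg, abs_of_nonneg (by linarith)]
        · simp only [hxdef, if_neg hi]
          simp; linarith
      linarith
    have hge := hfC x (hball hxball)
    have hxsum : ∑ l, (r l : ℝ) * x l = (r l₀ : ℝ) * (-(ε/2)) := by
      rw [Finset.sum_eq_single l₀]
      · simp [hxdef]
      · intro b _ hb; simp [hxdef, if_neg hb]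
      · intro h; exact absurd (Finset.mem_univ l₀) h
    rw [hxsum] at hge
    nlinarith
  · intro hno
    by_contra h0
    have hQconv : Convex ℝ Qs := by
      intro x hx y hy s t hs ht hst
      refine hQmem _ fun l => ?_
      simp only [Pi.add_apply, Pi.smul_apply, smul_eq_mul]
      exact add_nonneg (mul_nonneg hs (hQmem' x hx l)) (mul_nonneg ht (hQmem' y hy l))
    have hCconv : Convex ℝ C := (convex_convexHull ℝ S).add hQconv
    obtain ⟨w₀, hw₀⟩ := hζ
    set a : Fin N → ℝ := fun l => (w₀ l : ℝ) + 1 with hadef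
    have haU : a ∈ interior C := by
      rw [mem_interior]
      refine ⟨{x | ∀ l, (w₀ l : ℝ) < x l}, ?_, ?_, fun l => lt_add_one _⟩
      · intro x hx
        rw [hCdef, Set.mem_add]
        exact ⟨fun l => (w₀ l : ℝ), subset_convexHull ℝ S ⟨w₀, hw₀, rfl⟩,
          x - fun l => (w₀ l : ℝ),
          hQmem _ fun l => by simpa [sub_nonneg] using (hx l).le,
          by funext l; simp⟩
      · have hop : {x : Fin N → ℝ | ∀ l, (w₀ l:ℝ) < x l}
            = Set.pi Set.univ fun l => Set.Ioi ((w₀ l : ℝ)) := by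
          ext x; simp [Set.mem_pi]
        rw [hop]
        exact isOpen_set_pi Set.finite_univ fun _ _ => isOpen_Ioi
    obtain ⟨f, hf⟩ := geometric_hahn_banach_open_point (hCconv.interior) isOpen_interior h0
    have hf0 : ∀ x ∈ interior C, f x < 0 := by
      intro x hx
      simpa using hf x hx
    have hfle : ∀ x ∈ C, f x ≤ 0 := by
      intro x hx
      by_contra hpos
      push_neg at hpos
      have hden : 0 < f x + |f a| + 1 := by positivity
      set t : ℝ := f x / (f x + |f a| + 1) with htdef
      have ht0 : 0 < t := div_pos hpos hden
      have ht1 : t < 1 := by rw [div_lt_one hden]; linarith [abs_nonneg (f a)]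
      have hmem := hCconv.combo_interior_self_mem_interior haU hx ht0
        (by linarith : (0:ℝ) ≤ 1 - t) (by ring)
      have hlt := hf0 _ hmem
      simp only [map_add, map_smul, smul_eq_mul] at hlt
      have hmul : t * (f x + |f a| + 1) = f x := div_mul_cancel₀ _ hden.ne'
      have habs : t * (-|f a|) ≤ t * f a :=
        mul_le_mul_of_nonneg_left (neg_abs_le (f a)) ht0.le
      nlinarith
    have hfx : ∀ x : Fin N → ℝ, f x = ∑ l, x l * f (Pi.single l 1) := by
      intro x
      have hx : x = ∑ l, x l • (Pi.single l (1:ℝ) : Fin N → ℝ) := by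
        funext j
        rw [Finset.sum_apply]
        simp [Pi.single_apply]
      calc f x = f (∑ l, x l • (Pi.single l (1:ℝ) : Fin N → ℝ)) := by rw [← hx]
        _ = ∑ l, x l * f (Pi.single l 1) := by
            rw [map_sum]
            exact Finset.sum_congr rfl fun l _ => by rw [map_smul, smul_eq_mul]
    set r' : Fin N → ℝ := fun l => -f (Pi.single l 1) with hr'def
    have hfx' : ∀ x : Fin N → ℝ, f x = -∑ l, x l * r' l := by
      intro x
      rw [hfx x]
      simp [hr'def, mul_neg]
    have hr'0 : ∀ l, 0 ≤ r' l := by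
      intro l
      by_contra hneg
      push_neg at hneg
      have hfe : 0 < f (Pi.single l 1) := by
        rw [hr'def] at hneg; simp only [neg_neg] at hneg; linarith [neg_lt_zero.mp hneg]
      set tt : ℝ := (1 + |f a|) / f (Pi.single l 1) with httdef
      have htt0 : 0 < tt := div_pos (by positivity) hfe
      have hmemC : a + tt • (Pi.single l (1:ℝ) : Fin N → ℝ) ∈ C := by
        rw [hCdef, Set.mem_add]
        rw [hCdef] at haU
        obtain ⟨y, hy, z, hz, hyz⟩ := Set.mem_add.mp (interior_subset haU)
        refine ⟨y, hy, z + tt • (Pi.single l (1:ℝ) : Fin N → ℝ), hQmem _ fun j => ?_, ?_⟩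
        · have h1 : (0:ℝ) ≤ (tt • (Pi.single l (1:ℝ) : Fin N → ℝ)) j := by
            by_cases hj : j = l
            · subst hj; simp [Pi.single_apply]; positivity
            · simp [Pi.single_apply, hj]
          exact add_nonneg (hQmem' z hz j) h1
        · rw [← hyz]; abel
      have hle := hfle _ hmemC
      rw [map_add, map_smul, smul_eq_mul, httdef, div_mul_cancel₀ _ hfe.ne'] at hle
      have hfa : f a < 0 := hf0 a haU
      linarith [neg_abs_le (f a), abs_nonneg (f a)]
    have hr'w : ∀ w ∈ ζ, 0 ≤ ∑ l, ((w l : ℤ) : ℝ) * r' l := by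
      intro w hw
      have hwC : (fun l => (w l : ℝ)) ∈ C := by
        rw [hCdef, Set.mem_add]
        exact ⟨fun l => (w l : ℝ), subset_convexHull ℝ S ⟨w, hw, rfl⟩, 0,
          hQmem _ fun l => le_rfl, by funext l; simp⟩
      have hle := hfle _ hwC
      rw [hfx'] at hle
      simpa using hle
    have hex : ∃ l₀, 0 < r' l₀ := by
      by_contra hall
      push_neg at hall
      have hz : ∀ l, r' l = 0 := fun l => le_antisymm (hall l) (hr'0 l)
      have : f a = 0 := by
        rw [hfx' a]
        simp [hz]
      linarith [hf0 a haU]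
    obtain ⟨l₀, hl₀pos⟩ := hex
    set Bcon : Finset (Fin N → ℤ) := ζ ∪ Finset.image (fun l => Pi.single l 1) Finset.univ
      with hBcon
    have hsingleR : ∀ (l : Fin N) (v : Fin N → ℝ),
        ∑ l', ((Pi.single l 1 : Fin N → ℤ) l' : ℝ) * v l' = v l := by
      intro l v
      rw [Finset.sum_eq_single l]
      · simp
      · intro b _ hb; simp [Pi.single_eq_of_ne hb]
      · intro h; exact absurd (Finset.mem_univ l) h
    have hsingleQ : ∀ (l : Fin N) (v : Fin N → ℚ),
        ∑ l', ((Pi.single l 1 : Fin N → ℤ) l' : ℚ) * v l' = v l := by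
      intro l v
      rw [Finset.sum_eq_single l]
      · simp
      · intro b _ hb; simp [Pi.single_eq_of_ne hb]
      · intro h; exact absurd (Finset.mem_univ l) h
    have hrcon : ∀ β ∈ Bcon, 0 ≤ ∑ l, (β l : ℝ) * r' l := by
      intro β hβ
      rcases Finset.mem_union.mp hβ with h | h
      · exact hr'w β h
      · obtain ⟨l, -, rfl⟩ := Finset.mem_image.mp h
        rw [hsingleR]
        exact hr'0 l
    obtain ⟨ρ, hρ⟩ := key_rat N Bcon r' hrcon
    obtain ⟨rr, dd, hdd, hrr⟩ := key_int N ρ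
    have hmemsingle : ∀ l : Fin N, (Pi.single l 1 : Fin N → ℤ) ∈ Bcon := by
      intro l
      rw [hBcon, Finset.mem_union]
      exact Or.inr (Finset.mem_image.mpr ⟨l, Finset.mem_univ l, rfl⟩)
    have hρ0 : ∀ l, 0 ≤ ρ l := by
      intro l
      have h1 := (hρ _ (hmemsingle l)).1
      rwa [hsingleQ] at h1
    refine hno ⟨rr, ?_, ?_, ?_⟩
    · intro l
      have : (0:ℚ) ≤ (rr l : ℚ) := by
        rw [hrr l]; exact mul_nonneg hdd.le (hρ0 l)
      exact_mod_cast this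
    · have h2 := (hρ _ (hmemsingle l₀)).2 (by rw [hsingleR]; exact hl₀pos)
      rw [hsingleQ] at h2
      have hpos : (0:ℚ) < (rr l₀ : ℚ) := by
        rw [hrr l₀]; exact mul_pos hdd h2
      intro hzero
      rw [hzero] at hpos
      simp at hpos
    · intro w hw
      have h3 := (hρ w (Finset.mem_union.mpr (Or.inl hw))).1
      have hq : (0:ℚ) ≤ ∑ l, (rr l : ℚ) * (w l : ℚ) := by
        have heq : ∑ l, (rr l : ℚ) * (w l : ℚ) = dd * ∑ l, (w l : ℚ) * ρ l := by
          rw [Finset.mul_sum]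
          refine Finset.sum_congr rfl fun l _ => ?_
          rw [hrr l]; ring
        rw [heq]
        exact mul_nonneg hdd.le h3
      have : (0:ℚ) ≤ ((∑ l, rr l * w l : ℤ) : ℚ) := by push_cast; exact hq
      exact_mod_cast this
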